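/- Let D be a totally geodesic tangent distribution on the unit sphere of a 3-dimensional real inner product space E, with dim D_v ≥ 1 for every unit vector v. If there exist two linearly independent unit vectors v₁ and v₂ with D_{v₁} = v₁^⊥ and D_{v₂} = v₂^⊥ (i.e., dim D_{v₁} = dim D_{v₂} = 2), then D_v = v^⊥ for every unit vector v ∈ E. -/

import Mathlib

open scoped RealInnerProductSpace

/-- A tangent distribution `D` on the unit sphere of `E` (assigning to each unit vector `v`
a subspace `D v ≤ v^⊥`) is totally geodesic if the velocity field of every great circle
with initial position `v` and initial velocity a unit vector `w ∈ D v` remains in `D`. -/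
def TotallyGeodesicDistribution {E : Type*} [NormedAddCommGroup E] [InnerProductSpace ℝ E]
    (D : E → Submodule ℝ E) : Prop :=
  ∀ v w : E, ‖v‖ = 1 → ‖w‖ = 1 → w ∈ D v → ∀ t : ℝ,
    (-(Real.sin t) • v + Real.cos t • w) ∈ D (Real.cos t • v + Real.sin t • w)

lemma keyA {E : Type*} [NormedAddCommGroup E] [InnerProductSpace ℝ E]
    (D : E → Submodule ℝ E) (htg : TotallyGeodesicDistribution D)
    (v u : E) (hv : ‖v‖ = 1) (hu : ‖u‖ = 1)
    (hDv : D v = (Submodule.span ℝ {v})ᗮ)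
    (hne : u - ⟪v, u⟫ • v ≠ 0) : ⟪v, u⟫ • u - v ∈ D u := by
  set c := ⟪v, u⟫ with hc
  set w' := u - c • v with hw'
  set s := ‖w'‖ with hsdef
  have hvv : ⟪v, v⟫ = 1 := by
    rw [real_inner_self_eq_norm_mul_norm, hv]; norm_num
  have hs : 0 < s := norm_pos_iff.mpr hne
  have hs2 : s ^ 2 = 1 - c ^ 2 := by
    have hcomm : ⟪u, v⟫ = c := by rw [real_inner_comm]
    rw [hsdef, hw', norm_sub_sq_real, inner_smul_right, norm_smul, hu, hv, hcomm]
    simp [Real.norm_eq_abs]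
    nlinarith [sq_abs c]
  have hc2 : c ^ 2 ≤ 1 := by nlinarith
  have hvw' : ⟪v, w'⟫ = 0 := by
    rw [hw', inner_sub_right, inner_smul_right, hvv, ← hc]; ring
  set w : E := s⁻¹ • w' with hwdef
  have hw1 : ‖w‖ = 1 := by
    rw [hwdef, norm_smul, norm_inv, Real.norm_eq_abs, abs_of_pos hs, ← hsdef,
      inv_mul_cancel₀ hs.ne']
  have hwD : w ∈ D v := by
    rw [hDv, Submodule.mem_orthogonal_singleton_iff_inner_right, hwdef,
      inner_smul_right, hvw', mul_zero]
  set t := Real.arccos c with ht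
  have hcos : Real.cos t = c := Real.cos_arccos (by nlinarith) (by nlinarith)
  have hsin : Real.sin t = s := by
    rw [ht, Real.sin_arccos, ← hs2, Real.sqrt_sq hs.le]
  have h := htg v w hv hw1 hwD t
  rw [hcos, hsin] at h
  have h1 : c • v + s • w = u := by
    rw [hwdef, smul_smul, mul_inv_cancel₀ hs.ne', one_smul, hw']
    abel
  rw [h1] at h
  have h2 : c • u - v = s • (-s • v + c • w) := by
    rw [hwdef, hw']
    match_scalars <;> field_simp <;> nlinarith
  rw [h2]
  exact (D u).smul_mem _ h

lemma full2 {E : Type*} [NormedAddCommGroup E] [InnerProductSpace ℝ E]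
    [FiniteDimensional ℝ E] (hdim : Module.finrank ℝ E = 3)
    (D : E → Submodule ℝ E)
    (hsub : ∀ v : E, ‖v‖ = 1 → D v ≤ (Submodule.span ℝ {v})ᗮ)
    (htg : TotallyGeodesicDistribution D)
    (u a b : E) (hu : ‖u‖ = 1) (ha : ‖a‖ = 1) (hb : ‖b‖ = 1)
    (hDa : D a = (Submodule.span ℝ {a})ᗮ) (hDb : D b = (Submodule.span ℝ {b})ᗮ)
    (hind : LinearIndependent ℝ ![u, a, b]) : D u = (Submodule.span ℝ {u})ᗮ := by
  have hi := Fintype.linearIndependent_iff.mp hind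
  have hu0 : u ≠ 0 := fun h => by simp [h] at hu
  have hnea : u - ⟪a, u⟫ • a ≠ 0 := by
    intro h
    have := hi ![1, -⟪a, u⟫, 0] (by
      simp [Fin.sum_univ_three]
      rw [← sub_eq_zero] at h ⊢
      simpa [sub_eq_add_neg] using h) 0
    norm_num at this
  have hneb : u - ⟪b, u⟫ • b ≠ 0 := by
    intro h
    have := hi ![1, 0, -⟪b, u⟫] (by
      simp [Fin.sum_univ_three]
      rw [← sub_eq_zero] at h ⊢
      simpa [sub_eq_add_neg] using h) 0
    norm_num at this
  have hz₁ : ⟪a, u⟫ • u - a ∈ D u := keyA D htg a u ha hu hDa hnea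
  have hz₂ : ⟪b, u⟫ • u - b ∈ D u := keyA D htg b u hb hu hDb hneb
  -- the two vectors are linearly independent
  have hzind : LinearIndependent ℝ ![(⟪a, u⟫ • u - a), (⟪b, u⟫ • u - b)] := by
    rw [Fintype.linearIndependent_iff]
    intro g hg
    simp only [Fin.sum_univ_two, Matrix.cons_val_zero, Matrix.cons_val_one, Matrix.head_cons] at hg
    have hg' : ∑ i, (![g 0 * ⟪a, u⟫ + g 1 * ⟪b, u⟫, -g 0, -g 1]) i • (![u, a, b]) i = 0 := by
      simp [Fin.sum_univ_three, smul_sub, smul_smul]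
      rw [← hg]
      module
    have h0 := hi _ hg' 1
    have h1 := hi _ hg' 2
    simp at h0 h1
    intro i
    fin_cases i <;> simp [h0, h1]
  -- lift to D u
  have hle : 2 ≤ Module.finrank ℝ (D u) := by
    have : LinearIndependent ℝ ![(⟨_, hz₁⟩ : D u), ⟨_, hz₂⟩] := by
      apply LinearIndependent.of_comp (D u).subtype
      convert hzind using 1
      ext i
      fin_cases i <;> rfl
    simpa using this.fintype_card_le_finrank
  have horth : Module.finrank ℝ ((Submodule.span ℝ {u})ᗮ : Submodule ℝ E) = 2 := by
    have h1 : Module.finrank ℝ (Submodule.span ℝ {u}) = 1 := finrank_span_singleton hu0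
    have h2 := Submodule.finrank_add_finrank_orthogonal (K := Submodule.span ℝ {u}) (𝕜 := ℝ)
    omega
  exact Submodule.eq_of_le_of_finrank_le (hsub u hu) (by omega)

/-- If a totally geodesic tangent distribution `D` on the unit sphere of a `3`-dimensional
inner product space, with `dim D_v ≥ 1` everywhere, satisfies `D_{v₁} = v₁^⊥` and
`D_{v₂} = v₂^⊥` for two linearly independent unit vectors `v₁, v₂`, then `D_v = v^⊥`
for every unit vector `v`. -/
theorem totally_geodesic_distribution_two_full_points {E : Type*} [NormedAddCommGroup E]
    [InnerProductSpace ℝ E] [FiniteDimensional ℝ E] (hdim : Module.finrank ℝ E = 3)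
    (D : E → Submodule ℝ E)
    (hsub : ∀ v : E, ‖v‖ = 1 → D v ≤ (Submodule.span ℝ {v})ᗮ)
    (hrank : ∀ v : E, ‖v‖ = 1 → 1 ≤ Module.finrank ℝ (D v))
    (htg : TotallyGeodesicDistribution D)
    (v₁ v₂ : E) (hv₁ : ‖v₁‖ = 1) (hv₂ : ‖v₂‖ = 1)
    (hind : LinearIndependent ℝ ![v₁, v₂])
    (hD₁ : D v₁ = (Submodule.span ℝ {v₁})ᗮ) (hD₂ : D v₂ = (Submodule.span ℝ {v₂})ᗮ) :
    ∀ v : E, ‖v‖ = 1 → D v = (Submodule.span ℝ {v})ᗮ := by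
  have hrange : Set.range ![v₁, v₂] = {v₁, v₂} := by
    simp [Matrix.range_cons, Matrix.range_empty, Set.pair_comm]
  have stage1 : ∀ x : E, ‖x‖ = 1 → x ∉ Submodule.span ℝ {v₁, v₂} →
      D x = (Submodule.span ℝ {x})ᗮ := by
    intro x hx hxP
    refine full2 hdim D hsub htg x v₁ v₂ hx hv₁ hv₂ hD₁ hD₂ ?_
    have : LinearIndependent ℝ (Fin.cons x ![v₁, v₂]) :=
      linearIndependent_fin_cons.mpr ⟨hind, by rw [hrange]; exact hxP⟩
    exact this
  intro v hv
  by_cases hvP : v ∈ Submodule.span ℝ {v₁, v₂}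
  swap
  · exact stage1 v hv hvP
  -- hard case: v in the plane P
  set P := Submodule.span ℝ ({v₁, v₂} : Set E) with hP
  have hv0 : v ≠ 0 := fun h => by simp [h] at hv
  have hvv : ⟪v, v⟫ = 1 := by
    rw [real_inner_self_eq_norm_mul_norm, hv]; norm_num
  set c₁ : ℝ := ⟪v, v₁⟫ with hc₁
  set c₂ : ℝ := ⟪v, v₂⟫ with hc₂
  -- finrank P = 2
  have hP2 : Module.finrank ℝ P = 2 := by
    rw [hP, ← hrange]
    simpa using finrank_span_eq_card hind
  have hPorth : Module.finrank ℝ (Pᗮ : Submodule ℝ E) = 1 := by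
    have := Submodule.finrank_add_finrank_orthogonal (K := P) (𝕜 := ℝ)
    omega
  obtain ⟨n₀, hn₀P, hn₀ne⟩ : ∃ x, x ∈ Pᗮ ∧ x ≠ 0 := by
    apply Submodule.exists_mem_ne_zero_of_ne_bot
    intro h
    rw [h] at hPorth
    simp at hPorth
  set n : E := ‖n₀‖⁻¹ • n₀ with hndef
  have hn₀norm : ‖n₀‖ ≠ 0 := norm_ne_zero_iff.mpr hn₀ne
  have hn1 : ‖n‖ = 1 := by
    rw [hndef, norm_smul, norm_inv, norm_norm, inv_mul_cancel₀ hn₀norm]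
  have hnP : n ∈ Pᗮ := Pᗮ.smul_mem _ hn₀P
  -- a unit vector w in P orthogonal to v
  obtain ⟨w₀, hw₀P, hw₀v, hw₀ne⟩ : ∃ w₀, w₀ ∈ P ∧ ⟪v, w₀⟫ = 0 ∧ w₀ ≠ 0 := by
    have hv₁P : v₁ ∈ P := Submodule.subset_span (by simp)
    have hv₂P : v₂ ∈ P := Submodule.subset_span (by simp)
    by_cases h1 : v₁ - c₁ • v = 0
    · refine ⟨v₂ - c₂ • v, Submodule.sub_mem _ hv₂P (P.smul_mem _ hvP), ?_, ?_⟩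
      · rw [inner_sub_right, inner_smul_right, hvv, ← hc₂]; ring
      · intro h2
        have e1 : v₁ = c₁ • v := by rwa [sub_eq_zero] at h1
        have e2 : v₂ = c₂ • v := by rwa [sub_eq_zero] at h2
        have := Fintype.linearIndependent_iff.mp hind ![c₂, -c₁] (by
          simp only [Fin.sum_univ_two, Matrix.cons_val_zero, Matrix.cons_val_one,
            Matrix.head_cons]
          rw [e1, e2]
          module) 1
        simp at this
        rw [this] at e1
        simp [e1] at hv₁
    · refine ⟨v₁ - c₁ • v, Submodule.sub_mem _ hv₁P (P.smul_mem _ hvP), ?_, h1⟩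
      rw [inner_sub_right, inner_smul_right, hvv, ← hc₁]; ring
  set w : E := ‖w₀‖⁻¹ • w₀ with hwdef
  have hw₀norm : ‖w₀‖ ≠ 0 := norm_ne_zero_iff.mpr hw₀ne
  have hw1 : ‖w‖ = 1 := by
    rw [hwdef, norm_smul, norm_inv, norm_norm, inv_mul_cancel₀ hw₀norm]
  have hwP : w ∈ P := P.smul_mem _ hw₀P
  have hwv : ⟪v, w⟫ = 0 := by rw [hwdef, inner_smul_right, hw₀v, mul_zero]
  have hww : ⟪w, w⟫ = 1 := by
    rw [real_inner_self_eq_norm_mul_norm, hw1]; norm_num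
  have hnn : ⟪n, n⟫ = 1 := by
    rw [real_inner_self_eq_norm_mul_norm, hn1]; norm_num
  -- orthogonality facts
  have hnorth : ∀ x ∈ P, ⟪x, n⟫ = 0 := (Submodule.mem_orthogonal P n).mp hnP
  have hnw : ⟪w, n⟫ = 0 := hnorth w hwP
  have hnv : ⟪v, n⟫ = 0 := hnorth v hvP
  -- b := normalized n + w
  have hnwne : n + w ≠ 0 := by
    intro h
    have : ⟪n, n⟫ + ⟪w, n⟫ = 0 := by
      rw [← inner_add_left, h, inner_zero_left]
    rw [hnn, hnw] at this
    norm_num at this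
  have hnwnorm : ‖n + w‖ ≠ 0 := norm_ne_zero_iff.mpr hnwne
  set b : E := ‖n + w‖⁻¹ • (n + w) with hbdef
  have hb1 : ‖b‖ = 1 := by
    rw [hbdef, norm_smul, norm_inv, norm_norm, inv_mul_cancel₀ hnwnorm]
  have hnPmem : n ∉ P := by
    intro h
    have := hnorth n h
    rw [hnn] at this
    norm_num at this
  have hbPmem : b ∉ P := by
    intro h
    have : n + w = ‖n + w‖ • b := by
      rw [hbdef, smul_smul, mul_inv_cancel₀ hnwnorm, one_smul]
    have hnwP : n + w ∈ P := by rw [this]; exact P.smul_mem _ h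
    exact hnPmem (by simpa using P.sub_mem hnwP hwP)
  have hDn := stage1 n hn1 hnPmem
  have hDb := stage1 b hb1 hbPmem
  refine full2 hdim D hsub htg v n b hv hn1 hb1 hDn hDb ?_
  rw [Fintype.linearIndependent_iff]
  intro g hg
  simp only [Fin.sum_univ_three, Matrix.cons_val_zero, Matrix.cons_val_one, Matrix.head_cons,
    Matrix.cons_val_two, Matrix.tail_cons] at hg
  have hr : (0:ℝ) < ‖n + w‖⁻¹ := by positivity
  have hnv' : ⟪n, v⟫ = 0 := by rw [real_inner_comm]; exact hnv
  have hnw' : ⟪n, w⟫ = 0 := by rw [real_inner_comm]; exact hnw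
  have hwv' : ⟪w, v⟫ = 0 := by rw [real_inner_comm]; exact hwv
  have innn : ⟪n, g 0 • v + g 1 • n + g 2 • b⟫ = g 1 + g 2 * ‖n + w‖⁻¹ := by
    rw [hbdef]
    simp [inner_add_right, inner_smul_right, hnv', hnn, hnw', hn1]
  have innw : ⟪w, g 0 • v + g 1 • n + g 2 • b⟫ = g 2 * ‖n + w‖⁻¹ := by
    rw [hbdef]
    simp [inner_add_right, inner_smul_right, hwv', hnw, hww, hw1]
  rw [hg, inner_zero_right] at innn innw
  have hg2 : g 2 = 0 := by
    have := innw.symm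
    rcases mul_eq_zero.mp this with h | h
    · exact h
    · exact absurd h hr.ne'
  have hg1 : g 1 = 0 := by rw [hg2] at innn; linarith [innn.symm]
  have hg0 : g 0 = 0 := by
    rw [hg1, hg2] at hg
    simp at hg
    rcases hg with h | h
    · exact h
    · exact absurd h hv0
  intro i
  fin_cases i <;> simp [hg0, hg1, hg2]
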